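/- Let K ≥ 2 be an even integer and let Q_K be the square 2^K-ary QAM constellation. Set X = {1, i} and Y = {(2^{K/2}−1−4m) + (2^{K/2}−1−4n)·i : m, n ∈ ℤ, 0 ≤ m, n ≤ 2^{(K−2)/2}−1} ∪ {(2^{K/2}−3−4m) + (2^{K/2}−3−4n)·i : m, n ∈ ℤ, 0 ≤ m, n ≤ 2^{(K−2)/2}−1}. Then (X, Y) is a uniquely factorable constellation pair, {y/x : x ∈ X, y ∈ Y} = Q_K, and the minimum of |y − y'| over all distinct y, y' ∈ Y equals 2√2. -/

import Mathlib

/-- A pair `(X, Y)` of sets of complex numbers is a uniquely factorable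
constellation pair (UFCP) if `x * y' = x' * y` with `x, x' ∈ X` and
`y, y' ∈ Y` implies `x = x'` and `y = y'`. -/
def IsUFCP (X Y : Set ℂ) : Prop :=
  ∀ x ∈ X, ∀ x' ∈ X, ∀ y ∈ Y, ∀ y' ∈ Y, x * y' = x' * y → x = x' ∧ y = y'

/-- The square `2^K`-ary QAM constellation (for even `K ≥ 2`). -/
def sqQAM (K : ℕ) : Set ℂ :=
  {z | ∃ m n : ℤ, -(2 : ℤ) ^ ((K - 2) / 2) + 1 ≤ m ∧ m ≤ (2 : ℤ) ^ ((K - 2) / 2) ∧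
    -(2 : ℤ) ^ ((K - 2) / 2) + 1 ≤ n ∧ n ≤ (2 : ℤ) ^ ((K - 2) / 2) ∧
    z = (2 * (m : ℂ) - 1) + (2 * (n : ℂ) - 1) * Complex.I}

/-- The diagonal-lines sub-constellation of the square `2^K`-ary QAM
constellation, for even `K ≥ 2`. -/
def diagY (K : ℕ) : Set ℂ :=
  {z | ∃ m n : ℤ, 0 ≤ m ∧ m ≤ (2 : ℤ) ^ ((K - 2) / 2) - 1 ∧
      0 ≤ n ∧ n ≤ (2 : ℤ) ^ ((K - 2) / 2) - 1 ∧
      z = ((2 : ℂ) ^ (K / 2) - 1 - 4 * (m : ℂ)) +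
          ((2 : ℂ) ^ (K / 2) - 1 - 4 * (n : ℂ)) * Complex.I} ∪
  {z | ∃ m n : ℤ, 0 ≤ m ∧ m ≤ (2 : ℤ) ^ ((K - 2) / 2) - 1 ∧
      0 ≤ n ∧ n ≤ (2 : ℤ) ^ ((K - 2) / 2) - 1 ∧
      z = ((2 : ℂ) ^ (K / 2) - 3 - 4 * (m : ℂ)) +
          ((2 : ℂ) ^ (K / 2) - 3 - 4 * (n : ℂ)) * Complex.I}

lemma int_coords_eq {a b c d : ℤ}
    (h : (a:ℂ) + (b:ℂ) * Complex.I = (c:ℂ) + (d:ℂ) * Complex.I) : a = c ∧ b = d := by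
  have h1 := congrArg Complex.re h
  have h2 := congrArg Complex.im h
  simp at h1 h2
  exact ⟨by exact_mod_cast h1, by exact_mod_cast h2⟩

lemma sqrt_eight : Real.sqrt 8 = 2 * Real.sqrt 2 := by
  rw [show (8:ℝ) = 2^2 * 2 by norm_num, Real.sqrt_mul (by positivity),
    Real.sqrt_sq (by norm_num)]

lemma abs_int_coords (u v : ℤ) :
    ‖(u:ℂ) + (v:ℂ) * Complex.I‖ = Real.sqrt (((u^2 + v^2 : ℤ) : ℝ)) := by
  rw [show ((u:ℂ) + (v:ℂ)*Complex.I) = ((u:ℝ):ℂ) + ((v:ℝ):ℂ)*Complex.I by push_cast; ring,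
    Complex.norm_add_mul_I]
  push_cast
  ring_nf

lemma dist_sq_ge {u v : ℤ} (hu : u % 2 = 0) (hv : v % 2 = 0) (huv : (u-v) % 4 = 0)
    (hne : ¬(u = 0 ∧ v = 0)) : 8 ≤ u^2 + v^2 := by
  by_cases h4 : u % 4 = 0
  · have h1 : 4 ≤ u ∨ u ≤ -4 ∨ u = 0 := by omega
    have h2 : 4 ≤ v ∨ v ≤ -4 ∨ v = 0 := by omega
    rcases h1 with h|h|h <;> rcases h2 with h'|h'|h' <;>
      first
      | (exact absurd (And.intro h h') hne)
      | nlinarith [sq_nonneg u, sq_nonneg v]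
  · have h1 : 2 ≤ u ∨ u ≤ -2 := by omega
    have h2 : 2 ≤ v ∨ v ≤ -2 := by omega
    rcases h1 with h|h <;> rcases h2 with h'|h' <;> nlinarith

lemma diagY_coords {K k : ℕ} (hK : K = 2*k+2) {z : ℂ} (hz : z ∈ diagY K) :
    ∃ a b : ℤ, z = (a:ℂ) + (b:ℂ) * Complex.I ∧ a % 2 = 1 ∧ b % 2 = 1 ∧ (a - b) % 4 = 0 ∧
      -(2*2^k) + 1 ≤ a ∧ a ≤ 2*2^k - 1 ∧ -(2*2^k) + 1 ≤ b ∧ b ≤ 2*2^k - 1 := by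
  have hKd : K / 2 = k + 1 := by omega
  have hKm : (K - 2) / 2 = k := by omega
  have hp : (0:ℤ) < 2^k := by positivity
  obtain ⟨N, hNe⟩ : ∃ N : ℤ, (2:ℤ)^k = N := ⟨_, rfl⟩
  have hN1 : 1 ≤ N := by rw [← hNe]; omega
  have hNC : ((N:ℤ):ℂ) = (2:ℂ)^k := by rw [← hNe]; push_cast; ring
  simp only [diagY, Set.mem_union, Set.mem_setOf_eq, hKd, hKm, hNe] at hz
  rcases hz with ⟨m,n,hm0,hm1,hn0,hn1,hzeq⟩ | ⟨m,n,hm0,hm1,hn0,hn1,hzeq⟩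
  · refine ⟨2*N - 1 - 4*m, 2*N - 1 - 4*n, ?_, by omega, by omega, by omega,
      by omega, by omega, by omega, by omega⟩
    rw [hzeq]; push_cast [hNC]; rw [pow_succ]; ring
  · refine ⟨2*N - 3 - 4*m, 2*N - 3 - 4*n, ?_, by omega, by omega, by omega,
      by omega, by omega, by omega, by omega⟩
    rw [hzeq]; push_cast [hNC]; rw [pow_succ]; ring

lemma coords_mem_diagY {K k : ℕ} (hK : K = 2*k+2) {a b : ℤ}
    (ha : a % 2 = 1) (hb : b % 2 = 1) (hab : (a-b) % 4 = 0)
    (ha1 : -(2*2^k) + 1 ≤ a) (ha2 : a ≤ 2*2^k - 1)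
    (hb1 : -(2*2^k) + 1 ≤ b) (hb2 : b ≤ 2*2^k - 1) :
    (a:ℂ) + (b:ℂ) * Complex.I ∈ diagY K := by
  have hKd : K / 2 = k + 1 := by omega
  have hKm : (K - 2) / 2 = k := by omega
  have hp : (0:ℤ) < 2^k := by positivity
  obtain ⟨N, hNe⟩ : ∃ N : ℤ, (2:ℤ)^k = N := ⟨_, rfl⟩
  have hN1 : 1 ≤ N := by rw [← hNe]; omega
  have hNC : ((N:ℤ):ℂ) = (2:ℂ)^k := by rw [← hNe]; push_cast; ring
  rw [hNe] at ha1 ha2 hb1 hb2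
  simp only [diagY, Set.mem_union, Set.mem_setOf_eq, hKd, hKm, hNe]
  by_cases h4 : (2*N - 1 - a) % 4 = 0
  · left
    obtain ⟨m, hm⟩ : ∃ m, 2*N - 1 - a = 4*m := ⟨(2*N-1-a)/4, by omega⟩
    obtain ⟨n, hn⟩ : ∃ n, 2*N - 1 - b = 4*n := ⟨(2*N-1-b)/4, by omega⟩
    refine ⟨m, n, by omega, by omega, by omega, by omega, ?_⟩
    have hac : (a:ℂ) = 2*(N:ℂ) - 1 - 4*(m:ℂ) := by
      exact_mod_cast congrArg (fun t : ℤ => (t:ℂ)) (by omega : a = 2*N - 1 - 4*m)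
    have hbc : (b:ℂ) = 2*(N:ℂ) - 1 - 4*(n:ℂ) := by
      exact_mod_cast congrArg (fun t : ℤ => (t:ℂ)) (by omega : b = 2*N - 1 - 4*n)
    rw [hac, hbc, pow_succ, ← hNC]; push_cast; ring
  · right
    obtain ⟨m, hm⟩ : ∃ m, 2*N - 3 - a = 4*m := ⟨(2*N-3-a)/4, by omega⟩
    obtain ⟨n, hn⟩ : ∃ n, 2*N - 3 - b = 4*n := ⟨(2*N-3-b)/4, by omega⟩
    refine ⟨m, n, by omega, by omega, by omega, by omega, ?_⟩
    have hac : (a:ℂ) = 2*(N:ℂ) - 3 - 4*(m:ℂ) := by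
      exact_mod_cast congrArg (fun t : ℤ => (t:ℂ)) (by omega : a = 2*N - 3 - 4*m)
    have hbc : (b:ℂ) = 2*(N:ℂ) - 3 - 4*(n:ℂ) := by
      exact_mod_cast congrArg (fun t : ℤ => (t:ℂ)) (by omega : b = 2*N - 3 - 4*n)
    rw [hac, hbc, pow_succ, ← hNC]; push_cast; ring

lemma div_I_coords (u v : ℤ) :
    ((u:ℂ) + (v:ℂ)*Complex.I)/Complex.I = (v:ℂ) + ((-u : ℤ):ℂ) * Complex.I := by
  rw [div_eq_iff Complex.I_ne_zero]
  push_cast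
  linear_combination (u:ℂ) * Complex.I_mul_I

/-- With `X = {1, i}` and `Y` the diagonal-lines sub-constellation, `(X, Y)` is a
UFCP factorizing the square `2^K`-ary QAM constellation, and the minimum
distance between distinct points of `Y` is `2√2`. -/
theorem ufcp_sqQAM_two (K : ℕ) (hK2 : 2 ≤ K) (hKeven : K % 2 = 0) :
    IsUFCP ({1, Complex.I} : Set ℂ) (diagY K) ∧
    {w : ℂ | ∃ x ∈ ({1, Complex.I} : Set ℂ), ∃ y ∈ diagY K, w = y / x} = sqQAM K ∧
    (∀ y ∈ diagY K, ∀ y' ∈ diagY K, y ≠ y' →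
        2 * Real.sqrt 2 ≤ ‖y - y'‖) ∧
    (∃ y ∈ diagY K, ∃ y' ∈ diagY K, y ≠ y' ∧
        ‖y - y'‖ = 2 * Real.sqrt 2) := by
  obtain ⟨k, hk⟩ : ∃ k, K = 2*k+2 := ⟨K/2 - 1, by omega⟩
  have hp : (0:ℤ) < 2^k := by positivity
  refine ⟨?_, ?_, ?_, ?_⟩
  · -- UFCP
    intro x hx x' hx' y hy y' hy' hxy
    simp only [Set.mem_insert_iff, Set.mem_singleton_iff] at hx hx'
    obtain ⟨a, b, rfl, ha, hb, hab, _, _, _, _⟩ := diagY_coords hk hy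
    obtain ⟨c, d, rfl, hc, hd, hcd, _, _, _, _⟩ := diagY_coords hk hy'
    rcases hx with rfl | rfl <;> rcases hx' with rfl | rfl
    · rw [one_mul, one_mul] at hxy
      exact ⟨rfl, hxy.symm⟩
    · exfalso
      rw [one_mul] at hxy
      have h2 : (c:ℂ) + (d:ℂ)*Complex.I = ((-b : ℤ):ℂ) + ((a : ℤ):ℂ)*Complex.I := by
        rw [hxy]; push_cast; linear_combination ((b:ℂ)) * Complex.I_mul_I
      obtain ⟨he1, he2⟩ := int_coords_eq h2
      omega
    · exfalso
      rw [one_mul] at hxy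
      have h2 : (a:ℂ) + (b:ℂ)*Complex.I = ((-d : ℤ):ℂ) + ((c : ℤ):ℂ)*Complex.I := by
        rw [← hxy]; push_cast; linear_combination ((d:ℂ)) * Complex.I_mul_I
      obtain ⟨he1, he2⟩ := int_coords_eq h2
      omega
    · exact ⟨rfl, (mul_left_cancel₀ Complex.I_ne_zero hxy).symm⟩
  · -- set equality
    have hKm : (K - 2) / 2 = k := by omega
    ext w
    simp only [Set.mem_setOf_eq]
    constructor
    · rintro ⟨x, hx, y, hy, rfl⟩
      simp only [Set.mem_insert_iff, Set.mem_singleton_iff] at hx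
      obtain ⟨a, b, rfl, ha, hb, hab, ha1, ha2, hb1, hb2⟩ := diagY_coords hk hy
      simp only [sqQAM, Set.mem_setOf_eq, hKm]
      rcases hx with rfl | rfl
      · rw [div_one]
        obtain ⟨m, hm⟩ : ∃ m, a = 2*m - 1 := ⟨(a+1)/2, by omega⟩
        obtain ⟨n, hn⟩ : ∃ n, b = 2*n - 1 := ⟨(b+1)/2, by omega⟩
        refine ⟨m, n, by linarith, by linarith, by linarith, by linarith, ?_⟩
        rw [hm, hn]; push_cast; ring
      · rw [div_I_coords]
        obtain ⟨m, hm⟩ : ∃ m, b = 2*m - 1 := ⟨(b+1)/2, by omega⟩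
        obtain ⟨n, hn⟩ : ∃ n, -a = 2*n - 1 := ⟨(-a+1)/2, by omega⟩
        refine ⟨m, n, by linarith, by linarith, by linarith, by linarith, ?_⟩
        rw [hm, hn]; push_cast; ring
    · intro hw
      simp only [sqQAM, Set.mem_setOf_eq, hKm] at hw
      obtain ⟨m, n, hm1, hm2, hn1, hn2, rfl⟩ := hw
      have hac : (2*(m:ℂ) - 1) + (2*(n:ℂ) - 1)*Complex.I
          = ((2*m - 1 : ℤ):ℂ) + ((2*n - 1 : ℤ):ℂ)*Complex.I := by push_cast; ring
      by_cases h4 : ((2*m-1) - (2*n-1)) % 4 = 0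
      · refine ⟨1, Or.inl rfl, _, coords_mem_diagY hk (a := 2*m-1) (b := 2*n-1)
          (by omega) (by omega) h4 (by linarith) (by linarith) (by linarith) (by linarith), ?_⟩
        rw [div_one, hac]
      · refine ⟨Complex.I, Or.inr rfl, _, coords_mem_diagY hk (a := -(2*n-1)) (b := 2*m-1)
          (by omega) (by omega) (by omega) (by linarith) (by linarith) (by linarith) (by linarith), ?_⟩
        rw [div_I_coords, hac]
        norm_num
  · -- min distance lower bound
    intro y hy y' hy' hne
    obtain ⟨a, b, rfl, ha, hb, hab, _, _, _, _⟩ := diagY_coords hk hy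
    obtain ⟨c, d, rfl, hc, hd, hcd, _, _, _, _⟩ := diagY_coords hk hy'
    have hdiff : ((a:ℂ) + (b:ℂ)*Complex.I) - ((c:ℂ) + (d:ℂ)*Complex.I)
        = ((a - c : ℤ):ℂ) + ((b - d : ℤ):ℂ)*Complex.I := by push_cast; ring
    rw [hdiff, abs_int_coords, ← sqrt_eight]
    apply Real.sqrt_le_sqrt
    have h8 : (8:ℤ) ≤ (a-c)^2 + (b-d)^2 := by
      apply dist_sq_ge (by omega) (by omega) (by omega)
      rintro ⟨h1, h2⟩
      exact hne (by rw [show a = c by omega, show b = d by omega])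
    exact_mod_cast h8
  · -- attained
    have hmem1 : ((2*2^k - 1 : ℤ):ℂ) + ((2*2^k - 1 : ℤ):ℂ)*Complex.I ∈ diagY K :=
      coords_mem_diagY hk (by omega) (by omega) (by omega) (by omega) (by omega)
        (by omega) (by omega)
    have hmem2 : ((2*2^k - 3 : ℤ):ℂ) + ((2*2^k - 3 : ℤ):ℂ)*Complex.I ∈ diagY K :=
      coords_mem_diagY hk (by omega) (by omega) (by omega) (by omega) (by omega)
        (by omega) (by omega)
    refine ⟨_, hmem1, _, hmem2, ?_, ?_⟩
    · intro h
      have := (int_coords_eq h).1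
      omega
    · have hdiff : (((2*2^k - 1 : ℤ):ℂ) + ((2*2^k - 1 : ℤ):ℂ)*Complex.I)
          - (((2*2^k - 3 : ℤ):ℂ) + ((2*2^k - 3 : ℤ):ℂ)*Complex.I)
          = ((2 : ℤ):ℂ) + ((2 : ℤ):ℂ)*Complex.I := by push_cast; ring
      rw [hdiff, abs_int_coords, ← sqrt_eight]
      norm_num
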